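/- For every integer n ≥ 3 and x ∈ (0, π), the sum φ_n(x) = 2·∑_{j=1}^{n-1} sin(jx) + sin(nx) is nonnegative; moreover for n = 1 and n = 2, φ_n(x) > 0. -/

import Mathlib

open Real Finset

noncomputable def phi (n : ℕ) (x : ℝ) : ℝ :=
  2 * ∑ j ∈ Finset.Icc 1 (n - 1), Real.sin (j * x) + Real.sin (n * x)

lemma phi_succ (n : ℕ) (x : ℝ) :
    phi (n + 1) x = phi n x + Real.sin (n * x) + Real.sin ((n + 1) * x) := by
  rcases n with _ | m
  · simp [phi]
  · unfold phi
    rw [show (m + 1 + 1 : ℕ) - 1 = m + 1 from rfl, show (m + 1 : ℕ) - 1 = m from rfl,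
      Finset.sum_Icc_succ_top (by omega)]
    push_cast
    ring

lemma key (n : ℕ) (x : ℝ) :
    Real.sin (x / 2) * phi n x = Real.cos (x / 2) * (1 - Real.cos (n * x)) := by
  induction n with
  | zero => simp [phi]
  | succ n ih =>
    rw [phi_succ]
    have hs : Real.sin x = 2 * Real.sin (x / 2) * Real.cos (x / 2) := by
      rw [← Real.sin_two_mul]; ring_nf
    have hc : Real.cos x = Real.cos (x / 2) ^ 2 - Real.sin (x / 2) ^ 2 := by
      have h2 := Real.cos_two_mul (x / 2)
      rw [show 2 * (x / 2) = x by ring] at h2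
      nlinarith [Real.sin_sq_add_cos_sq (x / 2)]
    have hadd : ((n : ℝ) + 1) * x = n * x + x := by ring
    push_cast
    rw [hadd, Real.sin_add, Real.cos_add, hs, hc]
    have pyth := Real.sin_sq_add_cos_sq (x / 2)
    linear_combination ih + (Real.cos (x / 2) * Real.cos (n * x) - Real.sin (x / 2) * Real.sin (n * x)) * pyth

theorem stmt_1 :
    (∀ n : ℕ, 3 ≤ n → ∀ x ∈ Set.Ioo 0 Real.pi, 0 ≤ phi n x) ∧
    (∀ n : ℕ, n = 1 ∨ n = 2 → ∀ x ∈ Set.Ioo 0 Real.pi, 0 < phi n x) := by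
  constructor
  · intro n _ x hx
    obtain ⟨hx0, hxpi⟩ := hx
    have hs : 0 < Real.sin (x / 2) :=
      Real.sin_pos_of_pos_of_lt_pi (by linarith) (by linarith [Real.pi_pos])
    have hc : 0 ≤ Real.cos (x / 2) :=
      Real.cos_nonneg_of_mem_Icc ⟨by linarith [Real.pi_pos], by linarith⟩
    have h1 : Real.cos (n * x) ≤ 1 := Real.cos_le_one _
    have := key n x
    nlinarith
  · rintro n (rfl | rfl) x ⟨hx0, hxpi⟩
    · have : phi 1 x = Real.sin x := by simp [phi]
      rw [this]
      exact Real.sin_pos_of_pos_of_lt_pi hx0 hxpi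
    · have h1 : phi 2 x = 2 * Real.sin x + Real.sin (2 * x) := by
        simp [phi]
      have hsx : 0 < Real.sin x := Real.sin_pos_of_pos_of_lt_pi hx0 hxpi
      have hcx : -1 < Real.cos x := by
        rcases lt_or_eq_of_le (Real.neg_one_le_cos x) with h | h
        · exact h
        · exfalso
          have := Real.sin_sq_add_cos_sq x
          nlinarith
      rw [h1, Real.sin_two_mul]
      nlinarith
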